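/- Let D : [1, ∞) → ℝ be nondecreasing and continuous, and suppose D(1) < r < sup_{α} D(α). Then there exists α_0 ∈ (1, ∞) such that sup_{α > 1} ((α − 1)/α)·(r − D(α)) = sup_{α ∈ (1, α_0]} ((α − 1)/α)·(r − D(α)). -/

import Mathlib

/-- If `D` is nondecreasing and continuous on `[1, ∞)`, and `D 1 < r < sup_α D α`
(witnessed by some `α₁ ≥ 1` with `r < D α₁`), then the Hoeffding supremum over `α > 1`
is attained already over a bounded interval `(1, α₀]` for some `α₀ ∈ (1, ∞)`. -/
theorem hoeffding_sup_compact_interval (D : ℝ → ℝ)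
    (hmono : MonotoneOn D (Set.Ici 1)) (hcont : ContinuousOn D (Set.Ici 1))
    (r : ℝ) (hr1 : D 1 < r) (hr2 : ∃ α₁, 1 ≤ α₁ ∧ r < D α₁) :
    ∃ α₀ ∈ Set.Ioi (1 : ℝ),
      sSup ((fun α => (α - 1) / α * (r - D α)) '' Set.Ioi 1) =
        sSup ((fun α => (α - 1) / α * (r - D α)) '' Set.Ioc 1 α₀) := by
  obtain ⟨α₁, hα₁, hrα₁⟩ := hr2
  set f : ℝ → ℝ := fun α => (α - 1) / α * (r - D α) with hf
  have hα₁1 : 1 < α₁ := by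
    rcases lt_or_eq_of_le hα₁ with h | h
    · exact h
    · exact absurd hrα₁ (by rw [← h]; linarith)
  refine ⟨α₁, hα₁1, ?_⟩
  -- global upper bound
  have hfle : ∀ α, 1 < α → f α ≤ r - D 1 := by
    intro α hα
    have hq0 : 0 ≤ (α - 1) / α := div_nonneg (by linarith) (by linarith)
    have hq1 : (α - 1) / α ≤ 1 := by rw [div_le_one (by linarith)]; linarith
    have hD : D 1 ≤ D α := hmono (Set.mem_Ici.mpr le_rfl) (Set.mem_Ici.mpr hα.le) hα.le
    rcases le_or_gt (r - D α) 0 with h | h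
    · have := mul_nonpos_of_nonneg_of_nonpos hq0 h
      simp only [hf]; linarith
    · have := mul_le_of_le_one_left h.le hq1
      simp only [hf]; linarith
  have hSbdd : BddAbove (f '' Set.Ioi 1) := by
    refine ⟨r - D 1, ?_⟩
    rintro x ⟨α, hα, rfl⟩
    exact hfle α hα
  have hTbdd : BddAbove (f '' Set.Ioc 1 α₁) := by
    refine ⟨r - D 1, ?_⟩
    rintro x ⟨α, hα, rfl⟩
    exact hfle α hα.1
  -- find β ∈ Ioc 1 α₁ with D β < r
  have hc1 : ContinuousWithinAt D (Set.Ici 1) 1 := hcont 1 (Set.mem_Ici.mpr le_rfl)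
  have hev : ∀ᶠ x in nhdsWithin 1 (Set.Ici 1), D x < r :=
    hc1.eventually_lt_const hr1
  have hev' : ∀ᶠ x in nhdsWithin 1 (Set.Ioi 1), D x < r :=
    hev.filter_mono (nhdsWithin_mono 1 Set.Ioi_subset_Ici_self)
  have hev2 : ∀ᶠ x in nhdsWithin 1 (Set.Ioi 1), x ∈ Set.Ioc 1 α₁ := by
    have : Set.Ioc 1 α₁ ∈ nhdsWithin 1 (Set.Ioi 1) :=
      Ioc_mem_nhdsGT_of_mem ⟨le_rfl, hα₁1⟩
    exact this
  obtain ⟨β, hβmem, hβD⟩ := (hev2.and hev').exists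
  have hβpos : 0 < f β := by
    have h1 : 0 < (β - 1) / β := div_pos (by linarith [hβmem.1]) (by linarith [hβmem.1])
    exact mul_pos h1 (by linarith)
  have hβT : f β ∈ f '' Set.Ioc 1 α₁ := ⟨β, hβmem, rfl⟩
  apply le_antisymm
  · refine csSup_le ⟨f β, ⟨β, Set.mem_Ioi.mpr hβmem.1, rfl⟩⟩ ?_
    rintro x ⟨α, hα, rfl⟩
    rcases le_or_gt α α₁ with h | h
    · exact le_csSup hTbdd ⟨α, ⟨hα, h⟩, rfl⟩
    · have hDα : r < D α := lt_of_lt_of_le hrα₁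
        (hmono (Set.mem_Ici.mpr hα₁) (Set.mem_Ici.mpr (by linarith [Set.mem_Ioi.mp hα])) h.le)
    -- f α ≤ 0
      have hα1 : (1:ℝ) < α := hα
      have hq0 : 0 ≤ (α - 1) / α := div_nonneg (by linarith) (by linarith)
      have hfα : f α ≤ 0 := mul_nonpos_of_nonneg_of_nonpos hq0 (by linarith)
      exact hfα.trans (hβpos.le.trans (le_csSup hTbdd hβT))
  · exact csSup_le_csSup hSbdd ⟨f β, hβT⟩
      (Set.image_mono (fun x hx => Set.mem_Ioi.mpr hx.1))
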